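/- The Dirichlet series sum over (e1,...,e5) in N_0^5 satisfying e4 ≤ e3, e5 ≤ e3, and e5 ≤ e4 ≤ e5 + e1, of p^(-s(e1 + 2*e2 + 3*e3)), equals 1/((1-p^-s)(1-p^-2s)(1-p^-3s)^2(1-p^-4s)). Formally, for real t with 0 < t < 1 (substituting t = p^-s), the sum over (e1,...,e5) ∈ ℕ^5 with e4 ≤ e3, e5 ≤ e3, e5 ≤ e4 ≤ e5 + e1 of t^(e1 + 2e2 + 3e3) equals 1/((1-t)(1-t^2)(1-t^3)^2(1-t^4)). -/

import Mathlib

set_option maxHeartbeats 1000000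

def myEquiv : (ℕ × ℕ × ℕ × ℕ × ℕ) ≃
    {e : Fin 5 → ℕ // e 3 ≤ e 2 ∧ e 4 ≤ e 2 ∧ e 4 ≤ e 3 ∧ e 3 ≤ e 4 + e 0} where
  toFun x := ⟨![x.1 + x.2.2.1, x.2.2.2.1, x.2.2.2.2 + x.1 + x.2.1,
      x.2.2.2.2 + x.1, x.2.2.2.2], by
    refine ⟨?_, ?_, ?_, ?_⟩ <;> simp <;> omega⟩
  invFun e := (e.1 3 - e.1 4, e.1 2 - e.1 3, e.1 0 - (e.1 3 - e.1 4), e.1 1, e.1 4)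
  left_inv x := by
    obtain ⟨a, b, c, d, f⟩ := x
    simp
  right_inv e := by
    obtain ⟨e, h1, h2, h3, h4⟩ := e
    ext i
    fin_cases i <;> simp <;> omega

lemma tsum_prod_mul {β : Type*} (f : ℕ → ℝ) (g : β → ℝ) (hf : Summable f)
    (hg : Summable g) (hf0 : ∀ n, 0 ≤ f n) (hg0 : ∀ b, 0 ≤ g b) :
    ∑' x : ℕ × β, f x.1 * g x.2 = (∑' n, f n) * (∑' b, g b) := by
  rw [Summable.tsum_prod' (hf.mul_of_nonneg hg hf0 hg0) (fun b => hg.mul_left (f b))]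
  simp only [tsum_mul_left]
  rw [tsum_mul_right]

theorem stmt_0 (t : ℝ) (ht0 : 0 < t) (ht1 : t < 1) :
    ∑' e : {e : Fin 5 → ℕ // e 3 ≤ e 2 ∧ e 4 ≤ e 2 ∧ e 4 ≤ e 3 ∧ e 3 ≤ e 4 + e 0},
      t ^ (e.1 0 + 2 * e.1 1 + 3 * e.1 2)
    = 1 / ((1 - t) * (1 - t ^ 2) * (1 - t ^ 3) ^ 2 * (1 - t ^ 4)) := by
  have ht0' : (0:ℝ) ≤ t := ht0.le
  have h2 : t ^ 2 < 1 := pow_lt_one₀ ht0' ht1 two_ne_zero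
  have h3 : t ^ 3 < 1 := pow_lt_one₀ ht0' ht1 three_ne_zero
  have h4 : t ^ 4 < 1 := pow_lt_one₀ ht0' ht1 four_ne_zero
  have s1 : Summable fun n : ℕ => t ^ n := summable_geometric_of_lt_one ht0' ht1
  have s2 : Summable fun n : ℕ => (t ^ 2) ^ n :=
    summable_geometric_of_lt_one (by positivity) h2
  have s3 : Summable fun n : ℕ => (t ^ 3) ^ n :=
    summable_geometric_of_lt_one (by positivity) h3
  have s4 : Summable fun n : ℕ => (t ^ 4) ^ n :=
    summable_geometric_of_lt_one (by positivity) h4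
  rw [← Equiv.tsum_eq myEquiv]
  have hfun : (fun x : ℕ × ℕ × ℕ × ℕ × ℕ =>
      t ^ ((myEquiv x).1 0 + 2 * (myEquiv x).1 1 + 3 * (myEquiv x).1 2))
      = fun x => (t ^ 4) ^ x.1 * ((t ^ 3) ^ x.2.1 *
          (t ^ x.2.2.1 * ((t ^ 2) ^ x.2.2.2.1 * ((t ^ 3) ^ x.2.2.2.2)))) := by
    funext ⟨a, b, c, d, f⟩
    simp only [myEquiv, Equiv.coe_fn_mk, Matrix.cons_val_zero, Matrix.cons_val_one,
      Matrix.head_cons, Matrix.cons_val_two, Matrix.tail_cons]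
    rw [← pow_mul, ← pow_mul, ← pow_mul, ← pow_mul, ← pow_add, ← pow_add, ← pow_add,
      ← pow_add]
    congr 1
    ring
  rw [hfun]
  have sInner1 : Summable fun x : ℕ × ℕ => (t ^ 2) ^ x.1 * (t ^ 3) ^ x.2 :=
    s2.mul_of_nonneg s3 (fun n => by positivity) (fun n => by positivity)
  have sInner2 : Summable fun x : ℕ × ℕ × ℕ =>
      t ^ x.1 * ((t ^ 2) ^ x.2.1 * (t ^ 3) ^ x.2.2) :=
    s1.mul_of_nonneg sInner1 (fun n => by positivity) (fun n => by positivity)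
  have sInner3 : Summable fun x : ℕ × ℕ × ℕ × ℕ =>
      (t ^ 3) ^ x.1 * (t ^ x.2.1 * ((t ^ 2) ^ x.2.2.1 * (t ^ 3) ^ x.2.2.2)) :=
    s3.mul_of_nonneg sInner2 (fun n => by positivity) (fun n => by positivity)
  rw [tsum_prod_mul (fun n => (t ^ 4) ^ n)
      (fun x : ℕ × ℕ × ℕ × ℕ =>
        (t ^ 3) ^ x.1 * (t ^ x.2.1 * ((t ^ 2) ^ x.2.2.1 * (t ^ 3) ^ x.2.2.2)))
      s4 sInner3 (fun n => by positivity) (fun x => by positivity)]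
  rw [tsum_prod_mul (fun n => (t ^ 3) ^ n)
      (fun x : ℕ × ℕ × ℕ => t ^ x.1 * ((t ^ 2) ^ x.2.1 * (t ^ 3) ^ x.2.2))
      s3 sInner2 (fun n => by positivity) (fun x => by positivity)]
  rw [tsum_prod_mul (fun n => t ^ n)
      (fun x : ℕ × ℕ => (t ^ 2) ^ x.1 * (t ^ 3) ^ x.2)
      s1 sInner1 (fun n => by positivity) (fun x => by positivity)]
  rw [tsum_prod_mul (fun n => (t ^ 2) ^ n) (fun n : ℕ => (t ^ 3) ^ n)
      s2 s3 (fun n => by positivity) (fun x => by positivity)]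
  rw [tsum_geometric_of_lt_one ht0' ht1,
    tsum_geometric_of_lt_one (pow_nonneg ht0' 2) h2,
    tsum_geometric_of_lt_one (pow_nonneg ht0' 3) h3,
    tsum_geometric_of_lt_one (pow_nonneg ht0' 4) h4]
  have n1 : (1 - t) ≠ 0 := by nlinarith
  have n2 : (1 - t ^ 2) ≠ 0 := by nlinarith
  have n3 : (1 - t ^ 3) ≠ 0 := by nlinarith
  have n4 : (1 - t ^ 4) ≠ 0 := by nlinarith
  field_simp
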